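/- Let m ≥ 1 and n ≥ 2 be integers, let G = ℤ/2ᵐℤ × ℤ/2ⁿℤ (written additively), let S = {(1,0), (0,1), (1,1)}, and let ι be the inversion (negation) automorphism of G. Then the generalized Cayley graph GC(G, S, ι) is not vertex-transitive: it is not the case that for every pair of vertices u, v there is a graph automorphism of GC(G, S, ι) mapping u to v. -/

import Mathlib

/-- The generalized Cayley graph `GC(G, S, α)` for an additively written group. -/
def GCadd {G : Type*} [AddGroup G] (α : G ≃+ G) (S : Set G)
    (h1 : ∀ x : G, α (α x) = x)
    (h2 : ∀ x : G, α (-x) + x ∉ S)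
    (h3 : ⇑α '' (-S) = S) : SimpleGraph G where
  Adj x y := α (-x) + y ∈ S
  symm := by
    refine ⟨?_⟩
    intro x y hxy
    have hmem : -(α (-x) + y) ∈ -S := by simpa [Set.mem_neg] using hxy
    have himg : α (-(α (-x) + y)) ∈ ⇑α '' (-S) := Set.mem_image_of_mem _ hmem
    rw [h3] at himg
    simpa [neg_add_rev, map_add, map_neg, h1] using himg
  loopless := ⟨fun x hx => h2 x hx⟩

private lemma double_ne_one {k : ℕ} (hk : 1 ≤ k) (a : ZMod (2 ^ k)) : a + a ≠ 1 := by
  intro h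
  have hdvd : (2 : ℕ) ∣ 2 ^ k := dvd_pow_self 2 (by omega)
  have h2 := congrArg (ZMod.castHom hdvd (ZMod 2)) h
  rw [map_add, map_one] at h2
  revert h2
  generalize (ZMod.castHom hdvd (ZMod 2)) a = b
  revert b
  decide

private lemma nine_h1 (m n : ℕ) :
    ∀ x : ZMod (2 ^ m) × ZMod (2 ^ n),
      (AddEquiv.neg (ZMod (2 ^ m) × ZMod (2 ^ n)))
        ((AddEquiv.neg (ZMod (2 ^ m) × ZMod (2 ^ n))) x) = x := by
  intro x; simp

private lemma nine_h2 (m n : ℕ) (hm : 1 ≤ m) (hn : 2 ≤ n) :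
    ∀ x : ZMod (2 ^ m) × ZMod (2 ^ n),
      (AddEquiv.neg (ZMod (2 ^ m) × ZMod (2 ^ n))) (-x) + x ∉
        ({(1, 0), (0, 1), (1, 1)} : Set (ZMod (2 ^ m) × ZMod (2 ^ n))) := by
  intro x hx
  have hx' : x + x ∈ ({(1, 0), (0, 1), (1, 1)} : Set (ZMod (2 ^ m) × ZMod (2 ^ n))) := by
    simpa using hx
  simp only [Set.mem_insert_iff, Set.mem_singleton_iff] at hx'
  rcases hx' with h | h | h
  · exact double_ne_one hm x.1 (congrArg Prod.fst h)
  · exact double_ne_one (by omega) x.2 (congrArg Prod.snd h)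
  · exact double_ne_one hm x.1 (congrArg Prod.fst h)

private lemma nine_h3 (m n : ℕ) :
    ⇑(AddEquiv.neg (ZMod (2 ^ m) × ZMod (2 ^ n))) ''
        (-({(1, 0), (0, 1), (1, 1)} : Set (ZMod (2 ^ m) × ZMod (2 ^ n)))) =
      ({(1, 0), (0, 1), (1, 1)} : Set (ZMod (2 ^ m) × ZMod (2 ^ n))) := by
  ext x
  simp only [Set.mem_image, Set.mem_neg, Set.mem_insert_iff, Set.mem_singleton_iff,
    AddEquiv.coe_toEquiv, AddEquiv.neg_apply]
  constructor
  · rintro ⟨y, hy, rfl⟩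
    rcases hy with h | h | h <;> simp_all
  · intro hx
    exact ⟨-x, by simpa using hx, by simp⟩

private lemma pair_push {M N M' N' : ℕ} (d1 : M' ∣ M) (d2 : N' ∣ N)
    {a b : ZMod M × ZMod N} (h : a = b) :
    (ZMod.castHom d1 (ZMod M') a.1, ZMod.castHom d2 (ZMod N') a.2) =
      (ZMod.castHom d1 (ZMod M') b.1, ZMod.castHom d2 (ZMod N') b.2) := by rw [h]

private lemma nine_adj (m n : ℕ) (hm : 1 ≤ m) (hn : 2 ≤ n)
    (x y : ZMod (2 ^ m) × ZMod (2 ^ n)) :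
    (GCadd (AddEquiv.neg (ZMod (2 ^ m) × ZMod (2 ^ n)))
        {(1, 0), (0, 1), (1, 1)} (nine_h1 m n) (nine_h2 m n hm hn) (nine_h3 m n)).Adj x y ↔
      x + y ∈ ({(1, 0), (0, 1), (1, 1)} : Set (ZMod (2 ^ m) × ZMod (2 ^ n))) := by
  change (AddEquiv.neg _) (-x) + y ∈ _ ↔ _
  rw [AddEquiv.neg_apply, neg_neg]

set_option maxHeartbeats 2000000 in
/-- For `m ≥ 1`, `n ≥ 2`, `G = ℤ/2ᵐℤ × ℤ/2ⁿℤ`, `S = {(1,0),(0,1),(1,1)}`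
and `ι` the negation automorphism, the generalized Cayley graph `GC(G, S, ι)` is not
vertex-transitive. -/
theorem stmt_9 (m n : ℕ) (hm : 1 ≤ m) (hn : 2 ≤ n) :
    ¬ ∀ u v : ZMod (2 ^ m) × ZMod (2 ^ n),
        ∃ e : GCadd (AddEquiv.neg (ZMod (2 ^ m) × ZMod (2 ^ n)))
              {(1, 0), (0, 1), (1, 1)} (nine_h1 m n) (nine_h2 m n hm hn) (nine_h3 m n) ≃g
            GCadd (AddEquiv.neg (ZMod (2 ^ m) × ZMod (2 ^ n)))
              {(1, 0), (0, 1), (1, 1)} (nine_h1 m n) (nine_h2 m n hm hn) (nine_h3 m n),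
          e u = v := by
  intro h
  set X := GCadd (AddEquiv.neg (ZMod (2 ^ m) × ZMod (2 ^ n)))
      {(1, 0), (0, 1), (1, 1)} (nine_h1 m n) (nine_h2 m n hm hn) (nine_h3 m n) with hX
  have d2 : (4:ℕ) ∣ 2^n := by
    calc (4:ℕ) = 2^2 := by norm_num
    _ ∣ 2^n := pow_dvd_pow 2 hn
  by_cases hm2 : 2 ≤ m
  · -- m ≥ 2 : (0,0) is in a triangle, (1,1) is not
    have d1 : (4:ℕ) ∣ 2^m := by
      calc (4:ℕ) = 2^2 := by norm_num
      _ ∣ 2^m := pow_dvd_pow 2 hm2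
    obtain ⟨e, he⟩ := h (1,1) (0,0)
    have hsymm : e.symm (0,0) = (1,1) := by rw [← he]; exact e.symm_apply_apply _
    have a1 : X.Adj (1,1) (e.symm (1,0)) := by
      rw [← hsymm]
      exact e.symm.map_adj_iff.mpr (by rw [nine_adj m n hm hn]; left; simp)
    have a2 : X.Adj (1,1) (e.symm (0,1)) := by
      rw [← hsymm]
      refine e.symm.map_adj_iff.mpr ?_
      rw [nine_adj m n hm hn]; right; left; simp
    have a3 : X.Adj (e.symm (1,0)) (e.symm (0,1)) := by
      refine e.symm.map_adj_iff.mpr ?_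
      rw [nine_adj m n hm hn]; right; right; simp
    rw [nine_adj m n hm hn] at a1 a2 a3
    simp only [Set.mem_insert_iff, Set.mem_singleton_iff] at a1 a2 a3
    rcases a1 with h1 | h1 | h1 <;> rcases a2 with h2 | h2 | h2 <;>
      rcases a3 with h3 | h3 | h3 <;>
    · rw [eq_sub_of_add_eq' h1, eq_sub_of_add_eq' h2] at h3
      have := pair_push d1 d2 h3
      simp only [Prod.fst_add, Prod.snd_add, Prod.fst_sub, Prod.snd_sub,
        map_add, map_sub, map_one, map_zero] at this
      exact absurd this (by decide)
  · -- m = 1 : (0,0) lies on an edge in two triangles, (0,1) does not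
    have hm1 : m = 1 := by omega
    subst hm1
    have d1 : (2:ℕ) ∣ 2^1 := by norm_num
    obtain ⟨e, he⟩ := h (0,1) (0,0)
    have hsymm : e.symm (0,0) = (0,1) := by rw [← he]; exact e.symm_apply_apply _
    have key : ((1,0) : ZMod (2^1) × ZMod (2^n)) + (1,1) = (0,1) := by
      have h11 : (1 : ZMod (2^1)) + 1 = 0 := by decide
      rw [Prod.mk_add_mk, h11, zero_add]
    have b1 : X.Adj (e.symm (0,0)) (e.symm (1,0)) :=
      e.symm.map_adj_iff.mpr (by rw [nine_adj 1 n hm hn]; left; simp)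
    have b2 : X.Adj (e.symm (0,0)) (e.symm (0,1)) :=
      e.symm.map_adj_iff.mpr (by rw [nine_adj 1 n hm hn]; right; left; simp)
    have b3 : X.Adj (e.symm (0,0)) (e.symm (1,1)) :=
      e.symm.map_adj_iff.mpr (by rw [nine_adj 1 n hm hn]; right; right; simp)
    have b4 : X.Adj (e.symm (1,0)) (e.symm (0,1)) :=
      e.symm.map_adj_iff.mpr (by rw [nine_adj 1 n hm hn]; right; right; simp)
    have b5 : X.Adj (e.symm (1,0)) (e.symm (1,1)) :=
      e.symm.map_adj_iff.mpr (by rw [nine_adj 1 n hm hn]; right; left; exact key)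
    have b6 : e.symm (0,1) ≠ e.symm (1,1) := by
      intro hq
      have hq2 := e.symm.injective hq
      have hq3 : (0 : ZMod (2^1)) = 1 := congrArg Prod.fst hq2
      exact absurd hq3 (by decide)
    rw [hsymm] at b1 b2 b3
    rw [nine_adj 1 n hm hn] at b1 b2 b3 b4 b5
    simp only [Set.mem_insert_iff, Set.mem_singleton_iff] at b1 b2 b3 b4 b5
    rcases b1 with h1 | h1 | h1 <;> rcases b2 with h2 | h2 | h2 <;>
      rcases b3 with h3 | h3 | h3 <;>
    · rw [eq_sub_of_add_eq' h1, eq_sub_of_add_eq' h2] at b4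
      rcases b4 with h4 | h4 | h4 <;>
      first
      | · have := pair_push d1 d2 h4
          simp only [Prod.fst_add, Prod.snd_add, Prod.fst_sub, Prod.snd_sub,
            map_add, map_sub, map_one, map_zero] at this
          exact absurd this (by decide)
      | · rw [eq_sub_of_add_eq' h1, eq_sub_of_add_eq' h3] at b5
          rcases b5 with h5 | h5 | h5 <;>
          first
          | exact b6 (add_left_cancel (h2.trans h3.symm))
          | · have := pair_push d1 d2 h5
              simp only [Prod.fst_add, Prod.snd_add, Prod.fst_sub, Prod.snd_sub,
                map_add, map_sub, map_one, map_zero] at this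
              exact absurd this (by decide)
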